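/- Let F_{z2} ⊆ F_{q2} ⊆ F_{p2} ⊆ F_{b2} and F_{z3} ⊆ F_{q3} ⊆ F_{p3} ⊆ F_{b3} be subcomplexes of an ungraded chain complex (C,d) satisfying F_{z3} = F_{p2}, F_{q3} ⊆ F_{b2}, and F_{b2} ⊆ F_{p3}. Then: (a) the assignment sending the class of x to the class of d(x) is a well-defined homomorphism d : S^{p3,z3}_{b3,q3} → S^{p2,z2}_{b2,q2}; (b) setting F_{b*} := F_{b2} + F_{p3}, the map S^{p2,z2}_{b2,q2} → S^{p2,z2}_{b*,q2} given by the identity on representatives is surjective, and its kernel equals im(d); consequently coker(d) is isomorphic to S^{p2,z2}_{b*,q2}. -/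

import Mathlib

open Function

/-- The numerator subgroup `F_p ∩ d⁻¹(F_z)` of an S-term. -/
abbrev Snum {C : Type*} [AddCommGroup C] (d : C →+ C) (Fp Fz : AddSubgroup C) :
    AddSubgroup C := Fp ⊓ Fz.comap d

/-- The denominator subgroup `d(F_b) + F_q` of an S-term. -/
abbrev Sden {C : Type*} [AddCommGroup C] (d : C →+ C) (Fb Fq : AddSubgroup C) :
    AddSubgroup C := Fb.map d ⊔ Fq

/-- The S-term `S^{pz}_{bq} = (F_p ∩ d⁻¹(F_z)) / ((F_p ∩ d⁻¹(F_z)) ∩ (d(F_b) + F_q))`. -/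
abbrev Sterm {C : Type*} [AddCommGroup C] (d : C →+ C) (Fp Fz Fb Fq : AddSubgroup C) :=
  ↥(Snum d Fp Fz) ⧸ (Sden d Fb Fq).addSubgroupOf (Snum d Fp Fz)

/-- The class of an element `x ∈ F_p ∩ d⁻¹(F_z)` in the S-term. -/
def Scls {C : Type*} [AddCommGroup C] (d : C →+ C) (Fp Fz Fb Fq : AddSubgroup C)
    {x : C} (hx : x ∈ Snum d Fp Fz) : Sterm d Fp Fz Fb Fq :=
  QuotientAddGroup.mk ⟨x, hx⟩

/-- Under `F_{z3} = F_{p2}`, `F_{q3} ⊆ F_{b2}`, `F_{b2} ⊆ F_{p3}`,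
the class of `x` ↦ class of `d x` is a well-defined homomorphism
`d : S^{p3,z3}_{b3,q3} → S^{p2,z2}_{b2,q2}`; with `F_{b*} := F_{b2} + F_{p3}` the map
`S^{p2,z2}_{b2,q2} → S^{p2,z2}_{b*,q2}` (identity on representatives) is surjective
with kernel `im(d)`, so `coker(d) ≅ S^{p2,z2}_{b*,q2}`. -/
theorem statement3 {C : Type*} [AddCommGroup C] (d : C →+ C) (hd : ∀ x : C, d (d x) = 0)
    (Fz2 Fq2 Fp2 Fb2 Fz3 Fq3 Fp3 Fb3 : AddSubgroup C)
    (hFz2 : ∀ x ∈ Fz2, d x ∈ Fz2) (hFq2 : ∀ x ∈ Fq2, d x ∈ Fq2)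
    (hFp2 : ∀ x ∈ Fp2, d x ∈ Fp2) (hFb2 : ∀ x ∈ Fb2, d x ∈ Fb2)
    (hFz3 : ∀ x ∈ Fz3, d x ∈ Fz3) (hFq3 : ∀ x ∈ Fq3, d x ∈ Fq3)
    (hFp3 : ∀ x ∈ Fp3, d x ∈ Fp3) (hFb3 : ∀ x ∈ Fb3, d x ∈ Fb3)
    (h1 : Fz2 ≤ Fq2) (h2 : Fq2 ≤ Fp2) (h3 : Fp2 ≤ Fb2)
    (h4 : Fz3 ≤ Fq3) (h5 : Fq3 ≤ Fp3) (h6 : Fp3 ≤ Fb3)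
    (hA : Fz3 = Fp2) (hB : Fq3 ≤ Fb2) (hC : Fb2 ≤ Fp3) :
    ∃ D : Sterm d Fp3 Fz3 Fb3 Fq3 →+ Sterm d Fp2 Fz2 Fb2 Fq2,
      (∀ (x : C) (hx : x ∈ Snum d Fp3 Fz3) (hdx : d x ∈ Snum d Fp2 Fz2),
        D (Scls d Fp3 Fz3 Fb3 Fq3 hx) = Scls d Fp2 Fz2 Fb2 Fq2 hdx) ∧
      ∃ π : Sterm d Fp2 Fz2 Fb2 Fq2 →+ Sterm d Fp2 Fz2 (Fb2 ⊔ Fp3) Fq2,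
        (∀ (x : C) (hx : x ∈ Snum d Fp2 Fz2),
          π (Scls d Fp2 Fz2 Fb2 Fq2 hx) = Scls d Fp2 Fz2 (Fb2 ⊔ Fp3) Fq2 hx) ∧
        Surjective π ∧ π.ker = D.range ∧
        Nonempty ((Sterm d Fp2 Fz2 Fb2 Fq2 ⧸ D.range) ≃+
          Sterm d Fp2 Fz2 (Fb2 ⊔ Fp3) Fq2) := by
    classical
  have hdnum : ∀ x ∈ Snum d Fp3 Fz3, d x ∈ Snum d Fp2 Fz2 := by
    intro x hx
    obtain ⟨hx1, hx2⟩ := hx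
    exact ⟨hA ▸ hx2, show d (d x) ∈ Fz2 by rw [hd x]; exact Fz2.zero_mem⟩
  let g : ↥(Snum d Fp3 Fz3) →+ ↥(Snum d Fp2 Fz2) :=
    AddMonoidHom.codRestrict (d.comp (Snum d Fp3 Fz3).subtype) _
      (fun x => hdnum x x.2)
  have hker : ∀ x ∈ (Sden d Fb3 Fq3).addSubgroupOf (Snum d Fp3 Fz3),
      ((QuotientAddGroup.mk' ((Sden d Fb2 Fq2).addSubgroupOf (Snum d Fp2 Fz2))).comp g) x = 0 := by
    intro x hx
    rw [AddSubgroup.mem_addSubgroupOf] at hx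
    rw [AddSubgroup.mem_sup] at hx
    obtain ⟨b, hb, q, hq, hbq⟩ := hx
    obtain ⟨b', hb', rfl⟩ := hb
    rw [AddMonoidHom.comp_apply, QuotientAddGroup.mk'_apply,
      QuotientAddGroup.eq_zero_iff, AddSubgroup.mem_addSubgroupOf]
    have : ((g x : ↥(Snum d Fp2 Fz2)) : C) = d q := by
      show d (x : C) = d q
      rw [← hbq]
      simp [hd b']
    rw [this]
    exact AddSubgroup.mem_sup_left ⟨q, hB hq, rfl⟩
  set D := QuotientAddGroup.lift _ _ hker with hD
  refine ⟨D, ?_, ?_⟩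
  · intro x hx hdx
    rfl
  · have hle : (Sden d Fb2 Fq2).addSubgroupOf (Snum d Fp2 Fz2) ≤
        (Sden d (Fb2 ⊔ Fp3) Fq2).addSubgroupOf (Snum d Fp2 Fz2) := by
      intro x hx
      rw [AddSubgroup.mem_addSubgroupOf] at hx ⊢
      exact sup_le_sup_right (AddSubgroup.map_mono le_sup_left) _ hx
    set π := QuotientAddGroup.map ((Sden d Fb2 Fq2).addSubgroupOf (Snum d Fp2 Fz2))
      ((Sden d (Fb2 ⊔ Fp3) Fq2).addSubgroupOf (Snum d Fp2 Fz2)) (AddMonoidHom.id _)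
      (show (Sden d Fb2 Fq2).addSubgroupOf (Snum d Fp2 Fz2) ≤
        AddSubgroup.comap (AddMonoidHom.id _) ((Sden d (Fb2 ⊔ Fp3) Fq2).addSubgroupOf (Snum d Fp2 Fz2))
        from fun x hx => hle hx) with hπ
    have hsurj : Surjective π := by
      intro y
      induction y using QuotientAddGroup.induction_on with
      | H x => exact ⟨QuotientAddGroup.mk x, rfl⟩
    have hkereq : π.ker = D.range := by
      ext y
      induction y using QuotientAddGroup.induction_on with
      | H x =>
        simp only [AddMonoidHom.mem_ker, AddMonoidHom.mem_range]
        constructor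
        · intro hy
          rw [hπ, QuotientAddGroup.map_mk] at hy
          rw [QuotientAddGroup.eq_zero_iff, AddSubgroup.mem_addSubgroupOf] at hy
          rw [AddSubgroup.mem_sup] at hy
          obtain ⟨b, hb, q, hq, hbq⟩ := hy
          obtain ⟨b', hb', rfl⟩ := hb
          rw [SetLike.mem_coe, AddSubgroup.mem_sup] at hb'
          obtain ⟨u, hu, v, hv, huv⟩ := hb'
          have hy1 : (x : C) = d (u + v) + q := by
            rw [huv]
            exact hbq.symm
          have huvmem : u + v ∈ Snum d Fp3 Fz3 := by
            refine ⟨Fp3.add_mem (hC hu) hv, show d (u + v) ∈ Fz3 from ?_⟩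
            have h7 : d (u + v) = (x : C) - q := by rw [hy1]; abel
            rw [hA, h7]
            exact Fp2.sub_mem x.2.1 (h2 hq)
          refine ⟨QuotientAddGroup.mk ⟨u + v, huvmem⟩, ?_⟩
          show QuotientAddGroup.mk (g ⟨u + v, huvmem⟩) = QuotientAddGroup.mk x
          rw [QuotientAddGroup.eq, AddSubgroup.mem_addSubgroupOf]
          show (-(g ⟨u + v, huvmem⟩ : C) + (x : C)) ∈ Sden d Fb2 Fq2
          have h8 : -(g ⟨u + v, huvmem⟩ : C) + (x : C) = q := by
            show -d (u + v) + (x : C) = q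
            rw [hy1]; abel
          rw [h8]
          exact AddSubgroup.mem_sup_right hq
        · rintro ⟨z, hz⟩
          rw [← hz]
          induction z using QuotientAddGroup.induction_on with
          | H w =>
            show π (QuotientAddGroup.mk (g w)) = 0
            rw [hπ, QuotientAddGroup.map_mk]
            rw [QuotientAddGroup.eq_zero_iff, AddSubgroup.mem_addSubgroupOf]
            show d (w : C) ∈ Sden d (Fb2 ⊔ Fp3) Fq2
            exact AddSubgroup.mem_sup_left ⟨w, AddSubgroup.mem_sup_right w.2.1, rfl⟩
    exact ⟨π, fun x hx => rfl, hsurj, hkereq,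
      ⟨hkereq ▸ QuotientAddGroup.quotientKerEquivOfSurjective π hsurj⟩⟩
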